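/- Let n = 2^m with m ≥ 2 and let C1 be an odd binary (n, 2^(n-1)/n, 4) code. Then for every binary word x of length n with an even number of 1s there exists a unique y ∈ C1 with Hamming distance d(x,y) = 1. -/

import Mathlib

/-- The (Hamming) weight of a binary word: the number of 1s. -/
def wt {n : ℕ} (y : Fin n → Fin 2) : ℕ :=
  (Finset.univ.filter (fun i => y i = 1)).card

namespace UNIC

def flp {n : ℕ} (y : Fin n → Fin 2) (i : Fin n) : Fin n → Fin 2 :=
  Function.update y i (y i + 1)

lemma two_add (a : Fin 2) : a + 1 + 1 = a := by fin_cases a <;> decide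
lemma add_one_ne (a : Fin 2) : a + 1 ≠ a := by fin_cases a <;> decide

lemma flip_flip {n : ℕ} (y : Fin n → Fin 2) (i : Fin n) : flp (flp y i) i = y := by
  funext j
  by_cases h : j = i
  · subst h; simp [flp, two_add]
  · simp [flp, Function.update_of_ne h]

lemma filter_ne_flip {n : ℕ} (y : Fin n → Fin 2) (i : Fin n) :
    (Finset.univ.filter fun k => y k ≠ flp y i k) = {i} := by
  ext k
  simp only [Finset.mem_filter, Finset.mem_univ, true_and, Finset.mem_singleton]
  constructor
  · intro h
    by_contra hk
    exact h (by simp [flp, Function.update_of_ne hk])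
  · intro h; subst h
    simp only [flp, Function.update_self]
    exact fun h => add_one_ne (y k) h.symm

lemma hd_flip {n : ℕ} (y : Fin n → Fin 2) (i : Fin n) : hammingDist y (flp y i) = 1 := by
  unfold hammingDist
  rw [filter_ne_flip]
  simp

lemma parity {n : ℕ} (x y : Fin n → Fin 2) :
    (hammingDist x y + wt x + wt y) % 2 = 0 := by
  classical
  set A := Finset.univ.filter (fun i => x i = 1) with hA
  set B := Finset.univ.filter (fun i => y i = 1) with hB
  have h1 : A.card = (A \ B).card + (A ∩ B).card := (Finset.card_sdiff_add_card_inter A B).symm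
  have h2 : B.card = (B \ A).card + (B ∩ A).card := (Finset.card_sdiff_add_card_inter B A).symm
  have hBA : (B ∩ A).card = (A ∩ B).card := by rw [Finset.inter_comm]
  have key : ∀ a b : Fin 2, (a ≠ b ↔ (a = 1 ∧ ¬ b = 1) ∨ (b = 1 ∧ ¬ a = 1)) := by decide
  have hD : (Finset.univ.filter fun i => x i ≠ y i) = (A \ B) ∪ (B \ A) := by
    ext i
    simp only [Finset.mem_filter, Finset.mem_univ, true_and, Finset.mem_union,
      Finset.mem_sdiff, hA, hB]
    exact key (x i) (y i)
  have hdisj : Disjoint (A \ B) (B \ A) := by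
    exact disjoint_sdiff_sdiff
  have h3 : hammingDist x y = (A \ B).card + (B \ A).card := by
    unfold hammingDist
    rw [hD, Finset.card_union_of_disjoint hdisj]
  have hwx : wt x = A.card := rfl
  have hwy : wt y = B.card := rfl
  omega

lemma wt_flip_parity {n : ℕ} (y : Fin n → Fin 2) (i : Fin n) :
    wt (flp y i) % 2 = (wt y + 1) % 2 := by
  have := parity y (flp y i)
  rw [hd_flip] at this
  omega

end UNIC

open UNIC in
/-- If `C1` is an odd binary `(n = 2^m, 2^(n-1)/n, 4)` code, then every
even-weight binary word of length `n` is at Hamming distance exactly 1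
from a unique codeword of `C1`. -/
theorem unique_neighbor_in_odd_code (m n : ℕ) (hm : 2 ≤ m) (hn : n = 2 ^ m)
    (C1 : Finset (Fin n → Fin 2))
    (hC1card : C1.card = 2 ^ (n - 1) / n)
    (hC1dist : ∀ x ∈ C1, ∀ y ∈ C1, x ≠ y → 4 ≤ hammingDist x y)
    (hC1odd : ∀ x ∈ C1, wt x % 2 = 1) :
    ∀ x : Fin n → Fin 2, wt x % 2 = 0 →
      ∃! y, y ∈ C1 ∧ hammingDist x y = 1 := by
  classical
  have hnpos : 0 < n := by rw [hn]; positivity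
  -- the set of even-weight words
  set E : Finset (Fin n → Fin 2) := Finset.univ.filter (fun x => wt x % 2 = 0) with hE
  -- |E| = 2^(n-1)
  have hEcard : E.card = 2 ^ (n - 1) := by
    set O : Finset (Fin n → Fin 2) := Finset.univ.filter (fun x => ¬ wt x % 2 = 0) with hO
    have hsum : E.card + O.card = 2 ^ n := by
      rw [hE, hO, Finset.card_filter_add_card_filter_not]
      simp [Fintype.card_fun]
    have hEO : E.card = O.card := by
      apply Finset.card_bij' (fun x _ => flp x ⟨0, hnpos⟩) (fun x _ => flp x ⟨0, hnpos⟩)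
      · intro a ha
        simp only [hE, hO, Finset.mem_filter, Finset.mem_univ, true_and] at ha ⊢
        rw [wt_flip_parity]; omega
      · intro a ha
        simp only [hE, hO, Finset.mem_filter, Finset.mem_univ, true_and] at ha ⊢
        rw [wt_flip_parity]; omega
      · intro a _; exact flip_flip a _
      · intro a _; exact flip_flip a _
    have h2 : 2 ^ n = 2 * 2 ^ (n - 1) := by
      rw [← pow_succ']
      congr 1
      omega
    omega
  -- the covered set
  set S : Finset (Fin n → Fin 2) :=
    C1.biUnion (fun y => Finset.image (flp y) Finset.univ) with hS
  have hflip_inj : ∀ y : Fin n → Fin 2, Function.Injective (flp y) := by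
    intro y i j h
    by_contra hij
    have h1 : flp y i i = y i + 1 := by simp [flp]
    have h2 : flp y j i = y i := by simp [flp, Function.update_of_ne hij]
    rw [h] at h1
    rw [h1] at h2
    exact add_one_ne (y i) h2
  have hScard : S.card = 2 ^ (n - 1) := by
    rw [hS, Finset.card_biUnion]
    · have : ∀ y ∈ C1, (Finset.image (flp y) Finset.univ).card = n := by
        intro y _
        rw [Finset.card_image_of_injective _ (hflip_inj y)]
        simp
      rw [Finset.sum_congr rfl this, Finset.sum_const, smul_eq_mul, hC1card]
      apply Nat.div_mul_cancel
      rw [hn]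
      apply pow_dvd_pow
      have := Nat.lt_two_pow_self (n := m)
      omega
    · intro y hy z hz hyz
      rw [Function.onFun, Finset.disjoint_left]
      intro a ha hb
      simp only [Finset.mem_image, Finset.mem_univ, true_and] at ha hb
      obtain ⟨i, hi⟩ := ha
      obtain ⟨j, hj⟩ := hb
      have hd1 : hammingDist y a = 1 := by rw [← hi]; exact hd_flip y i
      have hd2 : hammingDist a z = 1 := by rw [← hj, hammingDist_comm]; exact hd_flip z j
      have := hC1dist y hy z hz hyz
      have htri := hammingDist_triangle y a z
      omega
  have hSE : S ⊆ E := by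
    intro a ha
    simp only [hS, Finset.mem_biUnion, Finset.mem_image, Finset.mem_univ, true_and] at ha
    obtain ⟨y, hy, i, hi⟩ := ha
    simp only [hE, Finset.mem_filter, Finset.mem_univ, true_and]
    rw [← hi, wt_flip_parity]
    have := hC1odd y hy
    omega
  have hSeqE : S = E := Finset.eq_of_subset_of_card_le hSE (by omega)
  intro x hx
  have hxE : x ∈ E := by simp [hE, hx]
  rw [← hSeqE] at hxE
  simp only [hS, Finset.mem_biUnion, Finset.mem_image, Finset.mem_univ, true_and] at hxE
  obtain ⟨y, hy, i, hi⟩ := hxE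
  refine ⟨y, ⟨hy, ?_⟩, ?_⟩
  · rw [← hi, hammingDist_comm]; exact hd_flip y i
  · rintro z ⟨hz, hdz⟩
    by_contra hne
    have hdy : hammingDist x y = 1 := by rw [← hi, hammingDist_comm]; exact hd_flip y i
    have := hC1dist z hz y hy hne
    have htri := hammingDist_triangle z x y
    rw [hammingDist_comm z x] at htri
    omega
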